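/- The truncated-variance function V(b) = Var(Z | Z ≤ b), for Z a standard normal random variable, is strictly increasing on ℝ, and V(b) < 1 for every b ≤ 0. In particular, for every p ∈ (0, 1/2), the quantity γ(p) = 1 − V(−c_p) is strictly positive, where c_p > 0 is the unique real with Φ(−c_p) = p. -/

import Mathlib

open Real MeasureTheory Set Filter Topology Asymptotics

/-- The standard normal density `φ(t) = exp(-t²/2)/√(2π)`. -/
noncomputable def stdPhi (t : ℝ) : ℝ := Real.exp (-t ^ 2 / 2) / Real.sqrt (2 * Real.pi)

/-- The standard normal CDF `Φ(t) = ∫_{-∞}^t φ(s) ds`. -/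
noncomputable def stdCDF (t : ℝ) : ℝ := ∫ s in Set.Iic t, stdPhi s

/-- The variance of a standard normal truncated from above at `b`:
`V(b) = E[Z² | Z ≤ b] - (E[Z | Z ≤ b])²`, with
`E[f(Z) | Z ≤ b] = (1/Φ(b)) ∫_{-∞}^b f(z) φ(z) dz`. -/
noncomputable def truncVar (b : ℝ) : ℝ :=
  (stdCDF b)⁻¹ * (∫ z in Set.Iic b, z ^ 2 * stdPhi z)
    - ((stdCDF b)⁻¹ * (∫ z in Set.Iic b, z * stdPhi z)) ^ 2

lemma phi_pos (t : ℝ) : 0 < stdPhi t :=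
  div_pos (exp_pos _) (Real.sqrt_pos.2 (by positivity))

lemma continuous_phi : Continuous stdPhi := by
  unfold stdPhi; fun_prop

lemma phi_neg (t : ℝ) : stdPhi (-t) = stdPhi t := by
  unfold stdPhi; rw [neg_pow]; norm_num

lemma hasDerivAt_phi (t : ℝ) : HasDerivAt stdPhi (-t * stdPhi t) t := by
  have h : HasDerivAt (fun t : ℝ => -t ^ 2 / 2) (-t) t := by
    have := ((hasDerivAt_pow 2 t).neg).div_const 2
    refine this.congr_deriv ?_
    simp; ring
  have h2 := (h.exp).div_const (Real.sqrt (2 * Real.pi))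
  refine h2.congr_deriv ?_
  unfold stdPhi; ring

lemma integrable_pow_mul_phi (n : ℕ) : Integrable (fun t : ℝ => t ^ n * stdPhi t) := by
  have hn : (-1 : ℝ) < (n : ℝ) := lt_of_lt_of_le (by norm_num) (Nat.cast_nonneg n)
  have h := (integrable_rpow_mul_exp_neg_mul_sq (b := 1/2) (by norm_num) hn).div_const
      (Real.sqrt (2 * Real.pi))
  have he : (fun t : ℝ => t ^ n * stdPhi t)
      = fun x : ℝ => x ^ (n : ℝ) * Real.exp (-(1/2 : ℝ) * x ^ 2) / Real.sqrt (2 * Real.pi) := by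
    funext x
    rw [Real.rpow_natCast, show -(1/2 : ℝ) * x ^ 2 = -x ^ 2 / 2 by ring]
    unfold stdPhi; ring
  rw [he]; exact h

lemma integrable_phi : Integrable stdPhi := by
  have := integrable_pow_mul_phi 0
  simpa using this

lemma tendsto_pow_mul_phi_atTop (n : ℕ) :
    Tendsto (fun t : ℝ => t ^ n * stdPhi t) atTop (𝓝 0) := by
  have h := rpow_mul_exp_neg_mul_sq_isLittleO_exp_neg (b := 1/2) (by norm_num) (n : ℝ)
  have h2 : Tendsto (fun x : ℝ => Real.exp (-(1/2 : ℝ) * x)) atTop (𝓝 0) := by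
    apply Real.tendsto_exp_atBot.comp
    exact (tendsto_const_mul_atBot_of_neg (by norm_num)).2 tendsto_id
  have h3 : Tendsto (fun x : ℝ => x ^ (n:ℝ) * Real.exp (-(1/2:ℝ) * x ^ 2)) atTop (𝓝 0) :=
    h.isBigO.trans_tendsto h2
  have h4 := h3.div_const (Real.sqrt (2 * Real.pi))
  rw [zero_div] at h4
  refine h4.congr fun x => ?_
  rw [Real.rpow_natCast, show -(1/2 : ℝ) * x ^ 2 = -x ^ 2 / 2 by ring]
  unfold stdPhi; ring

lemma tendsto_pow_mul_phi_atBot (n : ℕ) :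
    Tendsto (fun t : ℝ => t ^ n * stdPhi t) atBot (𝓝 0) := by
  have h : Tendsto (fun u : ℝ => (-1 : ℝ) ^ n * (u ^ n * stdPhi u)) atTop (𝓝 0) := by
    simpa using (tendsto_pow_mul_phi_atTop n).const_mul ((-1 : ℝ) ^ n)
  have h2 := h.comp tendsto_neg_atBot_atTop
  refine h2.congr fun t => ?_
  simp only [Function.comp]
  rw [phi_neg, ← mul_assoc, ← mul_pow]
  norm_num

lemma tendsto_phi_atBot : Tendsto stdPhi atBot (𝓝 0) := by
  simpa using tendsto_pow_mul_phi_atBot 0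

lemma integrable_id_mul_phi : Integrable (fun t : ℝ => t * stdPhi t) := by
  simpa using integrable_pow_mul_phi 1

/-- ∫_{Iic b} z φ(z) dz = -φ(b). -/
lemma integral_id_mul_phi (b : ℝ) : ∫ z in Iic b, z * stdPhi z = -stdPhi b := by
  have h := integral_Iic_of_hasDerivAt_of_tendsto' (f := fun z => -stdPhi z)
      (f' := fun z => z * stdPhi z) (a := b) (m := 0)
      (fun x _ => (hasDerivAt_phi x).neg.congr_deriv (by ring))
      (integrable_id_mul_phi.integrableOn) (by simpa using tendsto_phi_atBot.neg)
  simpa using h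

lemma cdf_pos (b : ℝ) : 0 < stdCDF b := by
  rw [stdCDF, setIntegral_pos_iff_support_of_nonneg_ae]
  · have : Function.support stdPhi ∩ Iic b = Iic b := by
      rw [inter_eq_right]
      intro x _; exact (phi_pos x).ne'
    rw [this]
    simp [Real.volume_Iic]
  · exact Eventually.of_forall fun x => (phi_pos x).le
  · exact integrable_phi.integrableOn

lemma cdf_nonneg (b : ℝ) : 0 ≤ stdCDF b := (cdf_pos b).le

lemma cdf_le_phi {b : ℝ} (hb : b ≤ -1) : stdCDF b ≤ stdPhi b := by
  have h1 : stdCDF b ≤ ∫ z in Iic b, -z * stdPhi z := by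
    rw [stdCDF]
    refine setIntegral_mono_on integrable_phi.integrableOn
      ((integrable_id_mul_phi.neg.congr
        (Eventually.of_forall fun x => by simp only [Pi.neg_apply]; ring)).integrableOn) measurableSet_Iic ?_
    intro x hx
    rw [mem_Iic] at hx
    have hx1 : (1 : ℝ) ≤ -x := by linarith
    nlinarith [phi_pos x]
  calc stdCDF b ≤ ∫ z in Iic b, -z * stdPhi z := h1
    _ = stdPhi b := by
        have : ∫ z in Iic b, -z * stdPhi z = -∫ z in Iic b, z * stdPhi z := by
          rw [← integral_neg]; congr 1; funext z; ring
        rw [this, integral_id_mul_phi, neg_neg]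

lemma tendsto_cdf_atBot : Tendsto stdCDF atBot (𝓝 0) := by
  refine tendsto_of_tendsto_of_tendsto_of_le_of_le' (g := fun _ => (0:ℝ)) (h := stdPhi)
    tendsto_const_nhds tendsto_phi_atBot
    (Eventually.of_forall fun x => cdf_nonneg x) ?_
  filter_upwards [eventually_le_atBot (-1 : ℝ)] with x hx
  exact cdf_le_phi hx

lemma hasDerivAt_cdf (b : ℝ) : HasDerivAt stdCDF (stdPhi b) b := by
  have key : stdCDF = fun x => stdCDF 0 + ∫ t in (0:ℝ)..x, stdPhi t := by
    funext x
    rw [← intervalIntegral.integral_Iic_sub_Iic integrable_phi.integrableOn integrable_phi.integrableOn]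
    simp [stdCDF]
  have h : HasDerivAt (fun x => ∫ t in (0:ℝ)..x, stdPhi t) (stdPhi b) b := by
    refine intervalIntegral.integral_hasDerivAt_right
      (integrable_phi.intervalIntegrable) ?_ continuous_phi.continuousAt
    exact continuous_phi.stronglyMeasurableAtFilter _ _
  rw [key]
  exact h.const_add _


noncomputable def Bf (b : ℝ) : ℝ := b * stdCDF b + stdPhi b
noncomputable def Lf (b : ℝ) : ℝ := (1 + b ^ 2) * stdCDF b + b * stdPhi b
noncomputable def Kf (b : ℝ) : ℝ := (stdCDF b) ^ 2 - Bf b * stdPhi b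

lemma hasDerivAt_B (b : ℝ) : HasDerivAt Bf (stdCDF b) b := by
  have h := ((hasDerivAt_id b).mul (hasDerivAt_cdf b)).add (hasDerivAt_phi b)
  refine h.congr_deriv ?_
  simp only [id_eq]; ring

lemma hasDerivAt_L (b : ℝ) : HasDerivAt Lf (2 * Bf b) b := by
  have h1 : HasDerivAt (fun x : ℝ => 1 + x ^ 2) (2 * b) b := by
    simpa using (hasDerivAt_pow 2 b).const_add 1
  have h := (h1.mul (hasDerivAt_cdf b)).add ((hasDerivAt_id b).mul (hasDerivAt_phi b))
  refine h.congr_deriv ?_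
  unfold Bf; simp only [id_eq]; ring

lemma hasDerivAt_K (b : ℝ) : HasDerivAt Kf (stdPhi b * Lf b) b := by
  have h := ((hasDerivAt_cdf b).pow 2).sub ((hasDerivAt_B b).mul (hasDerivAt_phi b))
  refine h.congr_deriv ?_
  unfold Lf Bf; ring

/-- squeeze helper: |x * Φ x| ≤ |x * φ x| for x ≤ -1. -/
lemma tendsto_mul_cdf_atBot : Tendsto (fun b : ℝ => b * stdCDF b) atBot (𝓝 0) := by
  refine squeeze_zero_norm' (a := fun x => |x * stdPhi x|) ?_ ?_
  · filter_upwards [eventually_le_atBot (-1 : ℝ)] with x hx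
    have h1 := cdf_le_phi hx
    have h2 := cdf_nonneg x
    have h3 := (phi_pos x).le
    rw [Real.norm_eq_abs, abs_mul, abs_of_nonneg h2]
    calc |x| * stdCDF x ≤ |x| * stdPhi x := by
          exact mul_le_mul_of_nonneg_left h1 (abs_nonneg x)
      _ = |x * stdPhi x| := by rw [abs_mul, abs_of_nonneg h3]
  · have := tendsto_pow_mul_phi_atBot 1
    simpa using this.abs
lemma tendsto_sq_mul_cdf_atBot : Tendsto (fun b : ℝ => b ^ 2 * stdCDF b) atBot (𝓝 0) := by
  refine squeeze_zero_norm' (a := fun x => |x ^ 2 * stdPhi x|) ?_ ?_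
  · filter_upwards [eventually_le_atBot (-1 : ℝ)] with x hx
    have h1 := cdf_le_phi hx
    have h2 := cdf_nonneg x
    have h3 := (phi_pos x).le
    rw [Real.norm_eq_abs, abs_mul, abs_of_nonneg h2]
    calc |x ^ 2| * stdCDF x ≤ |x ^ 2| * stdPhi x := by
          exact mul_le_mul_of_nonneg_left h1 (abs_nonneg _)
      _ = |x ^ 2 * stdPhi x| := by rw [abs_mul, abs_of_nonneg h3]
  · simpa using (tendsto_pow_mul_phi_atBot 2).abs

lemma tendsto_B_atBot : Tendsto Bf atBot (𝓝 0) := by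
  have := tendsto_mul_cdf_atBot.add tendsto_phi_atBot
  rw [add_zero] at this; exact this

lemma tendsto_L_atBot : Tendsto Lf atBot (𝓝 0) := by
  have h1 : Tendsto (fun b : ℝ => (1 + b ^ 2) * stdCDF b) atBot (𝓝 0) := by
    have := tendsto_cdf_atBot.add tendsto_sq_mul_cdf_atBot
    refine (by simpa using this : Tendsto _ atBot (𝓝 (0:ℝ))).congr fun x => by ring
  have h2 : Tendsto (fun b : ℝ => b * stdPhi b) atBot (𝓝 0) := by
    simpa using tendsto_pow_mul_phi_atBot 1
  have := h1.add h2; rw [add_zero] at this; exact this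

lemma tendsto_K_atBot : Tendsto Kf atBot (𝓝 0) := by
  have h1 : Tendsto (fun b : ℝ => (stdCDF b) ^ 2) atBot (𝓝 0) := by
    simpa using tendsto_cdf_atBot.pow 2
  have h2 : Tendsto (fun b : ℝ => Bf b * stdPhi b) atBot (𝓝 0) := by
    simpa using tendsto_B_atBot.mul tendsto_phi_atBot
  have := h1.sub h2; rw [sub_zero] at this; exact this

/-- A function with everywhere positive derivative tending to `0` at `-∞` is positive. -/
lemma pos_of_deriv_pos_tendsto {F f : ℝ → ℝ} (hd : ∀ x, HasDerivAt F (f x) x)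
    (hf : ∀ x, 0 < f x) (h0 : Tendsto F atBot (𝓝 0)) (b : ℝ) : 0 < F b := by
  have hm : StrictMono F := strictMono_of_hasDerivAt_pos hd hf
  have h1 : 0 ≤ F (b - 1) := by
    refine le_of_tendsto h0 ?_
    filter_upwards [eventually_le_atBot (b - 1)] with x hx
    exact (hm.le_iff_le).2 hx
  linarith [hm (show b - 1 < b by linarith)]

lemma B_pos (b : ℝ) : 0 < Bf b :=
  pos_of_deriv_pos_tendsto hasDerivAt_B cdf_pos tendsto_B_atBot b

lemma L_pos (b : ℝ) : 0 < Lf b :=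
  pos_of_deriv_pos_tendsto hasDerivAt_L (fun x => by have := B_pos x; linarith) tendsto_L_atBot b

lemma K_pos (b : ℝ) : 0 < Kf b :=
  pos_of_deriv_pos_tendsto hasDerivAt_K
    (fun x => mul_pos (phi_pos x) (L_pos x)) tendsto_K_atBot b

lemma continuous_cdf : Continuous stdCDF :=
  continuous_iff_continuousAt.2 fun b => (hasDerivAt_cdf b).continuousAt

lemma continuous_B : Continuous Bf :=
  continuous_iff_continuousAt.2 fun b => (hasDerivAt_B b).continuousAt

/-- integrability on `Iic b` for continuous nonneg functions dominated by φ on `Iic (-1)`. -/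
lemma integrableOn_Iic_of_le_phi {F : ℝ → ℝ} (hc : Continuous F) (h0 : ∀ x, 0 ≤ F x)
    (hle : ∀ x, x ≤ -1 → F x ≤ stdPhi x) (b : ℝ) : IntegrableOn F (Iic b) := by
  have h1 : IntegrableOn F (Iic (-1)) := by
    refine Integrable.mono' integrable_phi.integrableOn
      (hc.aestronglyMeasurable.restrict) ?_
    filter_upwards [ae_restrict_mem measurableSet_Iic] with x hx
    rw [Real.norm_eq_abs, abs_of_nonneg (h0 x)]
    exact hle x hx
  rcases le_total b (-1) with h | h
  · exact h1.mono_set (Iic_subset_Iic.2 h)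
  · have h2 : IntegrableOn F (Icc (-1) b) := hc.continuousOn.integrableOn_Icc
    have : Iic b = Iic (-1) ∪ Icc (-1) b := (Iic_union_Icc_eq_Iic h).symm
    rw [this]
    exact h1.union h2

lemma integrableOn_cdf (b : ℝ) : IntegrableOn stdCDF (Iic b) :=
  integrableOn_Iic_of_le_phi continuous_cdf cdf_nonneg (fun x hx => cdf_le_phi hx) b

lemma integrableOn_B (b : ℝ) : IntegrableOn Bf (Iic b) := by
  refine integrableOn_Iic_of_le_phi continuous_B (fun x => (B_pos x).le) (fun x hx => ?_) b
  have h1 := cdf_nonneg x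
  have : x * stdCDF x ≤ 0 := mul_nonpos_of_nonpos_of_nonneg (by linarith) h1
  unfold Bf; linarith

/-- ∫_{Iic b} φ = B has already the name stdCDF; identity (iii): ∫_{Iic b} Φ = B b. -/
lemma integral_cdf (b : ℝ) : ∫ u in Iic b, stdCDF u = Bf b := by
  have h := integral_Iic_of_hasDerivAt_of_tendsto' (f := Bf) (f' := stdCDF) (a := b) (m := 0)
      (fun x _ => hasDerivAt_B x) (integrableOn_cdf b) tendsto_B_atBot
  simpa using h

/-- identity (iv): ∫_{Iic b} B = L b / 2. -/
lemma integral_B (b : ℝ) : ∫ u in Iic b, Bf u = Lf b / 2 := by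
  have hd : ∀ x, HasDerivAt (fun y => Lf y / 2) (Bf x) x := by
    intro x
    have := (hasDerivAt_L x).div_const 2
    simpa using this
  have h := integral_Iic_of_hasDerivAt_of_tendsto' (f := fun y => Lf y / 2) (f' := Bf)
      (a := b) (m := 0) (fun x _ => hd x) (integrableOn_B b)
      (by simpa using tendsto_L_atBot.div_const 2)
  simpa using h

/-- identity (ii): ∫_{Iic b} z² φ = Φ b - b φ b. -/
lemma integral_sq_mul_phi (b : ℝ) :
    ∫ z in Iic b, z ^ 2 * stdPhi z = stdCDF b - b * stdPhi b := by
  have hd : ∀ x : ℝ, HasDerivAt (fun y => stdCDF y - y * stdPhi y) (x ^ 2 * stdPhi x) x := by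
    intro x
    have h := (hasDerivAt_cdf x).sub ((hasDerivAt_id x).mul (hasDerivAt_phi x))
    refine h.congr_deriv ?_
    simp only [id_eq]; ring
  have hlim : Tendsto (fun y : ℝ => stdCDF y - y * stdPhi y) atBot (𝓝 0) := by
    have := tendsto_cdf_atBot.sub (by simpa using tendsto_pow_mul_phi_atBot 1)
    simpa using this
  have h := integral_Iic_of_hasDerivAt_of_tendsto' (f := fun y => stdCDF y - y * stdPhi y)
      (f' := fun x => x ^ 2 * stdPhi x) (a := b) (m := 0) (fun x _ => hd x)
      ((integrable_pow_mul_phi 2).integrableOn) hlim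
  simpa using h

/-- P = B/Φ is strictly monotone. -/
lemma strictMono_P : StrictMono (fun b => Bf b / stdCDF b) := by
  refine strictMono_of_hasDerivAt_pos (f' := fun b => Kf b / (stdCDF b) ^ 2) ?_ ?_
  · intro x
    have h := (hasDerivAt_B x).div (hasDerivAt_cdf x) (cdf_pos x).ne'
    refine h.congr_deriv ?_
    unfold Kf; ring
  · intro x
    exact div_pos (K_pos x) (pow_pos (cdf_pos x) 2)

/-- Sampford's inequality, in the form L·Φ < 2B². -/
lemma sampford (b : ℝ) : Lf b * stdCDF b < 2 * (Bf b) ^ 2 := by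
  have hΦ := cdf_pos b
  set c : ℝ := Bf b / stdCDF b with hc
  have hpt : ∀ u, u ≤ b → Bf u ≤ c * stdCDF u := by
    intro u hu
    rcases eq_or_lt_of_le hu with rfl | hu'
    · rw [hc, div_mul_cancel₀ _ (cdf_pos u).ne']
    · have h2 : Bf u / stdCDF u < c := strictMono_P hu'
      rw [div_lt_iff₀ (cdf_pos u)] at h2
      linarith
  have h1 : (fun _ : ℝ => (0:ℝ)) ≤ᶠ[ae (volume.restrict (Iic b))] fun u => c * stdCDF u - Bf u := by
    filter_upwards [ae_restrict_mem measurableSet_Iic] with u hu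
    rw [mem_Iic] at hu
    have := hpt u hu
    show (0:ℝ) ≤ c * stdCDF u - Bf u
    linarith
  have h2 : IntegrableOn (fun u => c * stdCDF u - Bf u) (Iic b) :=
    ((integrableOn_cdf b).const_mul c).sub (integrableOn_B b)
  have key : 0 < ∫ u in Iic b, (c * stdCDF u - Bf u) := by
    rw [setIntegral_pos_iff_support_of_nonneg_ae h1 h2]
    have hsub : Iio b ⊆ (Function.support fun u => c * stdCDF u - Bf u) ∩ Iic b := by
      intro u hu
      rw [mem_Iio] at hu
      refine ⟨?_, le_of_lt hu⟩
      have h3 : Bf u / stdCDF u < c := strictMono_P hu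
      rw [div_lt_iff₀ (cdf_pos u)] at h3
      simp only [Function.mem_support]
      intro hzero
      linarith [sub_eq_zero.1 hzero]
    calc (0:ENNReal) < volume (Iio b) := by rw [Real.volume_Iio]; simp
      _ ≤ _ := measure_mono hsub
  rw [integral_sub ((integrableOn_cdf b).const_mul c) (integrableOn_B b),
      integral_const_mul, integral_cdf, integral_B, sub_pos] at key
  rw [hc, div_mul_eq_mul_div] at key
  rw [div_lt_div_iff₀ two_pos hΦ] at key
  nlinarith

lemma truncVar_eq (b : ℝ) : truncVar b = Kf b / (stdCDF b) ^ 2 := by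
  unfold truncVar
  rw [integral_sq_mul_phi, integral_id_mul_phi]
  have hΦ := (cdf_pos b).ne'
  field_simp
  unfold Kf Bf
  ring


/-- **Monotonicity of the truncated variance.** `V(b) = Var(Z | Z ≤ b)` is strictly
increasing on `ℝ` and `V(b) < 1` for all `b ≤ 0`. In particular, for every `p ∈ (0, 1/2)`,
`γ(p) = 1 - V(-c_p) > 0`, where `c_p > 0` is the unique real with `Φ(-c_p) = p`. -/
theorem stmt13 :
    StrictMono truncVar ∧ (∀ b : ℝ, b ≤ 0 → truncVar b < 1) ∧
    (∀ p cp : ℝ, p ∈ Set.Ioo (0 : ℝ) (1 / 2) → 0 < cp → stdCDF (-cp) = p →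
      0 < 1 - truncVar (-cp)) := by
  have hlt1 : ∀ b : ℝ, truncVar b < 1 := by
    intro b
    rw [truncVar_eq, div_lt_one (pow_pos (cdf_pos b) 2)]
    unfold Kf
    nlinarith [B_pos b, phi_pos b]
  have hmono : StrictMono truncVar := by
    have he : truncVar = fun b => Kf b / (stdCDF b) ^ 2 := funext truncVar_eq
    rw [he]
    refine strictMono_of_hasDerivAt_pos
      (f' := fun b => (stdPhi b * Lf b * (stdCDF b) ^ 2 - Kf b * (2 * stdCDF b * stdPhi b))
        / ((stdCDF b) ^ 2) ^ 2) ?_ ?_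
    · intro x
      have h := (hasDerivAt_K x).div ((hasDerivAt_cdf x).pow 2) (pow_ne_zero 2 (cdf_pos x).ne')
      refine h.congr_deriv ?_
      simp only [Pi.pow_apply]
      ring
    · intro x
      have hnum : 0 < stdPhi x * Lf x * (stdCDF x) ^ 2 - Kf x * (2 * stdCDF x * stdPhi x) := by
        have h1 : stdPhi x * Lf x * (stdCDF x) ^ 2 - Kf x * (2 * stdCDF x * stdPhi x)
            = stdPhi x * stdCDF x * (Lf x * stdCDF x - 2 * Kf x) := by ring
        rw [h1]
        refine mul_pos (mul_pos (phi_pos x) (cdf_pos x)) ?_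
        have hs := sampford x
        have hident : Lf x * stdCDF x = (Bf x) ^ 2 + Kf x := by
          unfold Lf Kf Bf; ring
        nlinarith
      exact div_pos hnum (pow_pos (pow_pos (cdf_pos x) 2) 2)
  refine ⟨hmono, fun b _ => hlt1 b, fun p cp _ hcp _ => ?_⟩
  linarith [hlt1 (-cp)]
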